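/- Let K ⊂ ℝ² be compact and let B ⊂ ℝ² be a bounded open set with K ⊂ B. For each n ∈ ℕ let a₁ⁿ,…,aₙⁿ ∈ K, let μⁿ = (1/n)∑_{i=1}^n δ_{aᵢⁿ}, and suppose μⁿ converges weakly-* to a probability measure μ on K which charges no points (μ({x}) = 0 for every x). Then the logarithmic potentials φⁿ(x) := ∫_K log|x−y| dμⁿ(y) = (1/n)∑_{i=1}^n log|x−aᵢⁿ| converge strongly in L¹(B) to the function φ(x) := ∫_K log|x−y| dμ(y). -/

import Mathlib

open MeasureTheory Filter Topology
open scoped ENNReal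

local notation "E2" => EuclideanSpace ℝ (Fin 2)

private lemma vol_ball2 (y : E2) (r : ℝ) :
    volume (Metric.ball y r) = ENNReal.ofReal r ^ 2 * ENNReal.ofReal Real.pi := by
  rw [EuclideanSpace.volume_ball]
  norm_num [Real.Gamma_two, Real.sq_sqrt Real.pi_pos.le]

private lemma meas_g (ε : ℝ) :
    Measurable (fun p : E2 × E2 => Real.log (max ‖p.1 - p.2‖ ε) - Real.log ‖p.1 - p.2‖) := by
  have h1 : Measurable (fun p : E2 × E2 => ‖p.1 - p.2‖) :=
    (continuous_fst.sub continuous_snd).norm.measurable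
  exact (Real.measurable_log.comp (h1.max measurable_const)).sub (Real.measurable_log.comp h1)

private lemma glemma {ε : ℝ} (hε : 0 < ε) (y : E2) (B : Set E2) :
    ∫⁻ x in B, ENNReal.ofReal |Real.log (max ‖x - y‖ ε) - Real.log ‖x - y‖| ∂volume
      ≤ ENNReal.ofReal (ε ^ 2 * Real.pi) := by
  set g : E2 → ℝ := fun x => |Real.log (max ‖x - y‖ ε) - Real.log ‖x - y‖| with hg
  have hgm : Measurable g := ((meas_g ε).comp (measurable_id.prodMk measurable_const)).abs
  calc ∫⁻ x in B, ENNReal.ofReal (g x) ∂volume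
      ≤ ∫⁻ x, ENNReal.ofReal (g x) ∂volume := setLIntegral_le_lintegral _ _
    _ = ∫⁻ t in Set.Ioi (0:ℝ), volume {x | t < g x} :=
        lintegral_eq_lintegral_meas_lt volume (Eventually.of_forall fun x => abs_nonneg _)
          hgm.aemeasurable
    _ ≤ ∫⁻ t in Set.Ioi (0:ℝ), ENNReal.ofReal (ε ^ 2 * Real.pi * Real.exp (-2 * t)) := by
        apply lintegral_mono_ae
        filter_upwards [ae_restrict_mem measurableSet_Ioi] with t ht
        have hsub : {x : E2 | t < g x} ⊆ Metric.ball y (ε * Real.exp (-t)) := by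
          intro x hx
          simp only [Set.mem_setOf_eq] at hx
          rcases eq_or_ne x y with rfl | hxy
          · exact Metric.mem_ball_self (by positivity)
          · have hr : 0 < ‖x - y‖ := by
              simpa [sub_eq_zero] using (norm_sub_pos_iff.mpr hxy)
            have hcases : ‖x - y‖ < ε := by
              by_contra hge
              push_neg at hge
              rw [hg] at hx
              simp only [max_eq_left hge] at hx
              simp at hx; linarith [ht.out, hx]
            have hgx : g x = Real.log ε - Real.log ‖x - y‖ := by
              rw [hg]; simp only [max_eq_right hcases.le]
              rw [abs_of_nonneg (sub_nonneg.mpr (Real.log_le_log hr hcases.le))]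
            rw [hgx] at hx
            have hlog : Real.log ‖x - y‖ < Real.log (ε * Real.exp (-t)) := by
              rw [Real.log_mul (ne_of_gt hε) (Real.exp_ne_zero _), Real.log_exp]
              linarith
            have := (Real.log_lt_log_iff hr (by positivity)).mp hlog
            simpa [mem_ball_iff_norm, dist_eq_norm] using this
        calc volume {x : E2 | t < g x} ≤ volume (Metric.ball y (ε * Real.exp (-t))) :=
              measure_mono hsub
          _ = ENNReal.ofReal (ε * Real.exp (-t)) ^ 2 * ENNReal.ofReal Real.pi := vol_ball2 _ _
          _ = ENNReal.ofReal (ε ^ 2 * Real.pi * Real.exp (-2 * t)) := by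
              rw [← ENNReal.ofReal_pow (by positivity), ← ENNReal.ofReal_mul (by positivity)]
              congr 1
              rw [mul_pow, ← Real.exp_nat_mul]
              ring_nf
    _ = ENNReal.ofReal (∫ t in Set.Ioi (0:ℝ), ε ^ 2 * Real.pi * Real.exp (-2 * t)) := by
        rw [ofReal_integral_eq_lintegral_ofReal]
        · exact (exp_neg_integrableOn_Ioi 0 (by norm_num : (0:ℝ) < 2)).const_mul _
        · filter_upwards with t
          positivity
    _ ≤ ENNReal.ofReal (ε ^ 2 * Real.pi) := by
        apply ENNReal.ofReal_le_ofReal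
        rw [integral_const_mul]
        have h1 : (∫ t in Set.Ioi (0:ℝ), Real.exp (-2 * t))
            ≤ ∫ t in Set.Ioi (0:ℝ), Real.exp (-t) := by
          apply setIntegral_mono_on
          · exact exp_neg_integrableOn_Ioi 0 (by norm_num)
          · simpa using exp_neg_integrableOn_Ioi 0 (by norm_num : (0:ℝ) < 1)
          · exact measurableSet_Ioi
          · intro t ht
            apply Real.exp_le_exp.mpr
            simp at ht; linarith
        rw [integral_exp_neg_Ioi_zero] at h1
        calc ε^2*Real.pi * ∫ t in Set.Ioi (0:ℝ), Real.exp (-2*t) ≤ ε^2*Real.pi * 1 :=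
              mul_le_mul_of_nonneg_left h1 (by positivity)
          _ = ε^2*Real.pi := mul_one _

set_option maxHeartbeats 1000000 in
/-- If empirical measures of points in a compact `K ⊆ B ⊆ ℝ²` converge weakly-*
to a probability measure `μ` on `K` charging no points, then the logarithmic potentials
`φⁿ(x) = (1/n)∑ log|x - aᵢⁿ|` converge strongly in `L¹(B)` to `φ(x) = ∫ log|x-y| dμ(y)`. -/
theorem stmt1
    (K B : Set (EuclideanSpace ℝ (Fin 2))) (hK : IsCompact K)
    (hBopen : IsOpen B) (hBbd : Bornology.IsBounded B) (hKB : K ⊆ B)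
    (a : ℕ → ℕ → EuclideanSpace ℝ (Fin 2))
    (ha : ∀ n, ∀ i < n, a n i ∈ K)
    (μ : Measure (EuclideanSpace ℝ (Fin 2))) [IsProbabilityMeasure μ]
    (hμK : μ Kᶜ = 0)
    (hatom : ∀ x, μ {x} = 0)
    (hconv : ∀ ψ : EuclideanSpace ℝ (Fin 2) → ℝ, Continuous ψ →
      Tendsto (fun n : ℕ =>
          ∫ x, ψ x ∂(((n : ℝ≥0∞))⁻¹ • ∑ i ∈ Finset.range n, Measure.dirac (a n i)))
        atTop (𝓝 (∫ x, ψ x ∂μ))) :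
    Tendsto (fun n : ℕ =>
        ∫ x in B, |(n : ℝ)⁻¹ * ∑ i ∈ Finset.range n, Real.log ‖x - a n i‖
          - ∫ y, Real.log ‖x - y‖ ∂μ|) atTop (𝓝 0) := by
  have hBmeas : MeasurableSet B := hBopen.measurableSet
  have hBfin : volume B < ⊤ := hBbd.measure_lt_top
  obtain ⟨r, hr⟩ := hBbd.subset_closedBall 0
  set R : ℝ := 2 * max r 0 + 1 with hRdef
  have hR1 : (1:ℝ) ≤ R := by
    have := le_max_right r 0; simp only [hRdef]; linarith [le_max_right r 0]
  have hRbd : ∀ x ∈ B, ∀ y ∈ K, ‖x - y‖ ≤ R := by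
    intro x hx y hy
    have hx' : ‖x‖ ≤ max r 0 := le_trans (by simpa using hr hx) (le_max_left r 0)
    have hy' : ‖y‖ ≤ max r 0 := le_trans (by simpa using hr (hKB hy)) (le_max_left r 0)
    calc ‖x - y‖ ≤ ‖x‖ + ‖y‖ := norm_sub_le _ _
      _ ≤ R := by simp only [hRdef]; linarith
  have haeK : ∀ᵐ y ∂μ, y ∈ K := by
    rw [ae_iff]
    exact hμK
  refine tendsto_order.2 ⟨fun b hb => Eventually.of_forall fun n =>
    lt_of_lt_of_le hb (integral_nonneg fun x => abs_nonneg _), fun δ hδ => ?_⟩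
  -- choose ε
  set ε : ℝ := min 1 (Real.sqrt (δ / (3 * (Real.pi + 1)))) with hεdef
  have hπ0 : (0:ℝ) < Real.pi + 1 := by linarith [Real.pi_pos]
  have hε : 0 < ε := lt_min one_pos (Real.sqrt_pos.mpr (by positivity))
  have hε1 : ε ≤ 1 := min_le_left _ _
  have hεπ : ε ^ 2 * Real.pi ≤ δ / 3 := by
    have h1 : ε ^ 2 ≤ δ / (3 * (Real.pi + 1)) := by
      have := min_le_right 1 (Real.sqrt (δ / (3 * (Real.pi + 1))))
      calc ε ^ 2 ≤ Real.sqrt (δ / (3 * (Real.pi + 1))) ^ 2 := by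
            apply pow_le_pow_left₀ hε.le this
        _ = δ / (3 * (Real.pi + 1)) := Real.sq_sqrt (by positivity)
    calc ε ^ 2 * Real.pi ≤ (δ / (3 * (Real.pi + 1))) * (Real.pi + 1) := by
          apply mul_le_mul h1 (by linarith) Real.pi_pos.le (by positivity)
      _ = δ / 3 := by field_simp
  -- kernel and remainder
  set k : E2 → E2 → ℝ := fun x y => Real.log (max ‖x - y‖ ε) with hkdef
  set g : E2 → E2 → ℝ := fun x y => k x y - Real.log ‖x - y‖ with hgdef
  set Φ : E2 → ℝ := fun x => ∫ y, k x y ∂μ with hΦdef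
  set G : E2 → ℝ := fun x => ∫ y, |g x y| ∂μ with hGdef
  set M : ℝ := Real.log R - Real.log ε with hMdef
  have hM0 : 0 ≤ M := by
    have h1 : Real.log ε ≤ 0 := Real.log_nonpos hε.le hε1
    have h2 : 0 ≤ Real.log R := Real.log_nonneg hR1
    simp only [hMdef]; linarith
  have hkcont : Continuous (fun p : E2 × E2 => k p.1 p.2) := by
    apply Continuous.log
    · exact ((continuous_fst.sub continuous_snd).norm.max continuous_const)
    · intro p
      exact ne_of_gt (lt_of_lt_of_le hε (le_max_right _ _))
  have hkcontx : ∀ x, Continuous (k x) := by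
    intro x
    show Continuous fun y => Real.log (max ‖x - y‖ ε)
    apply Continuous.log
    · exact ((continuous_const.sub continuous_id).norm.max continuous_const)
    · intro y
      exact ne_of_gt (lt_of_lt_of_le hε (le_max_right _ _))
  have hkbd : ∀ x ∈ B, ∀ y ∈ K, |k x y| ≤ M := by
    intro x hx y hy
    have h1 : ε ≤ max ‖x - y‖ ε := le_max_right _ _
    have h2 : max ‖x - y‖ ε ≤ R := max_le (hRbd x hx y hy) (le_trans hε1 hR1)
    have h3 : Real.log ε ≤ k x y := Real.log_le_log hε h1
    have h4 : k x y ≤ Real.log R := Real.log_le_log (lt_of_lt_of_le hε h1) h2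
    have h5 : Real.log ε ≤ 0 := Real.log_nonpos hε.le hε1
    have h6 : 0 ≤ Real.log R := Real.log_nonneg hR1
    rw [abs_le]; constructor <;> simp only [hMdef] <;> linarith
  -- measurability
  have hgmeas : Measurable (fun p : E2 × E2 => g p.1 p.2) := meas_g ε
  have hgmeasx : ∀ x, Measurable (fun y => g x y) := by
    intro x
    show Measurable fun y => Real.log (max ‖x - y‖ ε) - Real.log ‖x - y‖
    have h1 : Measurable (fun y : E2 => ‖x - y‖) :=
      (continuous_const.sub continuous_id).norm.measurable
    exact (Real.measurable_log.comp (h1.max measurable_const)).sub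
      (Real.measurable_log.comp h1)
  have hΦsm : StronglyMeasurable Φ :=
    hkcont.stronglyMeasurable.integral_prod_right'
  have hGsm : StronglyMeasurable G :=
    hgmeas.abs.stronglyMeasurable.integral_prod_right' (ν := μ)
  have hkint : ∀ x ∈ B, Integrable (k x) μ := by
    intro x hx
    refine Integrable.mono' (integrable_const M) (hkcontx x).aestronglyMeasurable ?_
    filter_upwards [haeK] with y hy
    simpa [Real.norm_eq_abs] using hkbd x hx y hy
  have hΦbd : ∀ x ∈ B, |Φ x| ≤ M := by
    intro x hx
    have hb : ∀ᵐ y ∂μ, ‖k x y‖ ≤ M := by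
      filter_upwards [haeK] with y hy
      simpa [Real.norm_eq_abs] using hkbd x hx y hy
    have := norm_integral_le_of_norm_le (f := fun y => k x y) (g := fun _ => M)
      (integrable_const M) hb
    simpa [Real.norm_eq_abs] using this
  -- Tonelli bound
  have hswap : ∫⁻ x in B, (∫⁻ y, ENNReal.ofReal |g x y| ∂μ) ∂volume
      ≤ ENNReal.ofReal (ε ^ 2 * Real.pi) := by
    rw [lintegral_lintegral_swap ((hgmeas.abs.ennreal_ofReal).aemeasurable)]
    calc ∫⁻ y, (∫⁻ x in B, ENNReal.ofReal |g x y| ∂volume) ∂μ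
        ≤ ∫⁻ _, ENNReal.ofReal (ε ^ 2 * Real.pi) ∂μ :=
          lintegral_mono fun y => glemma hε y B
      _ = ENNReal.ofReal (ε ^ 2 * Real.pi) := by simp
  have hGae : ∀ᵐ x ∂volume.restrict B, Integrable (fun y => g x y) μ := by
    have hfin : ∀ᵐ x ∂volume.restrict B, (∫⁻ y, ENNReal.ofReal |g x y| ∂μ) < ⊤ := by
      apply ae_lt_top (Measurable.lintegral_prod_right' hgmeas.abs.ennreal_ofReal)
      exact ne_top_of_le_ne_top ENNReal.ofReal_ne_top hswap
    filter_upwards [hfin] with x hx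
    refine ⟨(hgmeasx x).aestronglyMeasurable, ?_⟩
    rw [hasFiniteIntegral_iff_norm]
    simpa [← ofReal_norm_eq_enorm, Real.norm_eq_abs] using hx
  -- bounds for G
  have hGnonneg : ∀ x, 0 ≤ G x := fun x => integral_nonneg fun y => abs_nonneg _
  have hGlint : ∫⁻ x in B, ENNReal.ofReal (G x) ∂volume ≤ ENNReal.ofReal (ε ^ 2 * Real.pi) := by
    refine le_trans (lintegral_mono_ae ?_) hswap
    filter_upwards [hGae] with x hx
    exact (ofReal_integral_eq_lintegral_ofReal hx.abs
      (Eventually.of_forall fun y => abs_nonneg _)).le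
  have hGint : IntegrableOn G B volume := by
    refine ⟨hGsm.aestronglyMeasurable.restrict, ?_⟩
    rw [hasFiniteIntegral_iff_ofReal (Eventually.of_forall hGnonneg)]
    exact lt_of_le_of_lt hGlint ENNReal.ofReal_lt_top
  have hGbd : ∫ x in B, G x ∂volume ≤ δ / 3 := by
    rw [integral_eq_lintegral_of_nonneg_ae (Eventually.of_forall hGnonneg)
      hGsm.aestronglyMeasurable.restrict]
    exact ENNReal.toReal_le_of_le_ofReal (by positivity)
      (le_trans hGlint (ENNReal.ofReal_le_ofReal hεπ))
  -- per-point bounds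
  have hgym : ∀ y : E2, Measurable (fun x => |g x y|) := fun y =>
    ((meas_g ε).comp (measurable_id.prodMk measurable_const)).abs
  have hgyint : ∀ y : E2, IntegrableOn (fun x => |g x y|) B volume := by
    intro y
    refine ⟨(hgym y).aestronglyMeasurable.restrict, ?_⟩
    rw [hasFiniteIntegral_iff_ofReal (Eventually.of_forall fun x => abs_nonneg _)]
    exact lt_of_le_of_lt (glemma hε y B) ENNReal.ofReal_lt_top
  have hgybd : ∀ y : E2, ∫ x in B, |g x y| ∂volume ≤ ε ^ 2 * Real.pi := by
    intro y
    rw [integral_eq_lintegral_of_nonneg_ae (Eventually.of_forall fun x => abs_nonneg _)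
      (hgym y).aestronglyMeasurable.restrict]
    exact ENNReal.toReal_le_of_le_ofReal (by positivity) (glemma hε y B)
  -- Gn
  set Gn : ℕ → E2 → ℝ :=
    fun n x => (n:ℝ)⁻¹ * ∑ i ∈ Finset.range n, |g x (a n i)| with hGndef
  have hGnint : ∀ n, IntegrableOn (Gn n) B volume := by
    intro n
    exact Integrable.const_mul (integrable_finset_sum _ (fun i _ => hgyint (a n i))) _
  have hGnbd : ∀ n, ∫ x in B, Gn n x ∂volume ≤ δ / 3 := by
    intro n
    have heq : ∫ x in B, Gn n x ∂volume
        = (n:ℝ)⁻¹ * ∑ i ∈ Finset.range n, ∫ x in B, |g x (a n i)| ∂volume := by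
      rw [hGndef]
      simp only
      rw [integral_const_mul, integral_finset_sum _ (fun i _ => hgyint (a n i))]
    rw [heq]
    calc (n:ℝ)⁻¹ * ∑ i ∈ Finset.range n, ∫ x in B, |g x (a n i)| ∂volume
        ≤ (n:ℝ)⁻¹ * ∑ _i ∈ Finset.range n, ε^2*Real.pi :=
          mul_le_mul_of_nonneg_left (Finset.sum_le_sum fun i _ => hgybd (a n i))
            (by positivity)
      _ ≤ δ / 3 := by
          rw [Finset.sum_const, Finset.card_range, nsmul_eq_mul]
          rcases Nat.eq_zero_or_pos n with h|h
          · subst h; simp; positivity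
          · have hn : (0:ℝ) < n := by exact_mod_cast h
            rw [← mul_assoc, inv_mul_cancel₀ hn.ne', one_mul]
            exact hεπ
  -- A n
  set A : ℕ → E2 → ℝ :=
    fun n x => (n:ℝ)⁻¹ * ∑ i ∈ Finset.range n, k x (a n i) - Φ x with hAdef
  have hkconty : ∀ y, Continuous fun x => k x y := by
    intro y
    show Continuous fun x => Real.log (max ‖x - y‖ ε)
    apply Continuous.log
    · exact ((continuous_id.sub continuous_const).norm.max continuous_const)
    · intro x; exact ne_of_gt (lt_of_lt_of_le hε (le_max_right _ _))
  have hAm : ∀ n, Measurable (A n) := by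
    intro n
    apply Measurable.sub
    · apply Measurable.const_mul
      exact Finset.measurable_sum _ (fun i _ => (hkconty (a n i)).measurable)
    · exact hΦsm.measurable
  have habs_sub : ∀ u v : ℝ, |u - v| ≤ |u| + |v| := fun u v => by
    rw [sub_eq_add_neg]
    exact (abs_add_le u (-v)).trans (by rw [abs_neg])
  have hsumbd : ∀ n : ℕ, ∀ x ∈ B, |(n:ℝ)⁻¹ * ∑ i ∈ Finset.range n, k x (a n i)| ≤ M := by
    intro n x hx
    rw [abs_mul, abs_of_nonneg (inv_nonneg.mpr (Nat.cast_nonneg n) : (0:ℝ) ≤ (n:ℝ)⁻¹)]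
    calc (n:ℝ)⁻¹ * |∑ i ∈ Finset.range n, k x (a n i)|
        ≤ (n:ℝ)⁻¹ * ∑ i ∈ Finset.range n, |k x (a n i)| :=
          mul_le_mul_of_nonneg_left (Finset.abs_sum_le_sum_abs _ _) (by positivity)
      _ ≤ (n:ℝ)⁻¹ * ∑ _i ∈ Finset.range n, M :=
          mul_le_mul_of_nonneg_left
            (Finset.sum_le_sum fun i hi => hkbd x hx _ (ha n i (Finset.mem_range.mp hi)))
            (by positivity)
      _ ≤ M := by
          rw [Finset.sum_const, Finset.card_range, nsmul_eq_mul]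
          rcases Nat.eq_zero_or_pos n with h|h
          · subst h; simpa using hM0
          · have hn : (0:ℝ) < n := by exact_mod_cast h
            rw [← mul_assoc, inv_mul_cancel₀ hn.ne', one_mul]
  have hAbd : ∀ n, ∀ x ∈ B, |A n x| ≤ M + M := by
    intro n x hx
    calc |A n x| ≤ |(n:ℝ)⁻¹ * ∑ i ∈ Finset.range n, k x (a n i)| + |Φ x| := habs_sub _ _
      _ ≤ M + M := add_le_add (hsumbd n x hx) (hΦbd x hx)
  have hAint : ∀ n, IntegrableOn (fun x => |A n x|) B volume := by
    intro n
    refine Integrable.mono' (g := fun _ => M + M)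
      (integrableOn_const hBfin.ne) ((hAm n).abs.aestronglyMeasurable.restrict) ?_
    filter_upwards [ae_restrict_mem hBmeas] with x hx
    rw [Real.norm_eq_abs, abs_abs]
    exact hAbd n x hx
  have hAtends : ∀ x, Tendsto (fun n => A n x) atTop (𝓝 0) := by
    intro x
    have hψ' : Tendsto (fun n : ℕ =>
        ∫ z, k x z ∂(((n : ℝ≥0∞))⁻¹ • ∑ i ∈ Finset.range n, Measure.dirac (a n i)))
        atTop (𝓝 (Φ x)) := hconv (fun y => k x y) (hkcontx x)
    have hrw : ∀ n : ℕ,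
        (∫ z, k x z ∂(((n : ℝ≥0∞))⁻¹ • ∑ i ∈ Finset.range n, Measure.dirac (a n i)))
        = (n:ℝ)⁻¹ * ∑ i ∈ Finset.range n, k x (a n i) := by
      intro n
      rw [integral_smul_measure, integral_finset_sum_measure (fun i _ => ?_)]
      · simp only [integral_dirac, smul_eq_mul]
        congr 1
        simp [ENNReal.toReal_inv]
      · exact ⟨(hkcontx x).aestronglyMeasurable, by simp [HasFiniteIntegral, lintegral_dirac]⟩
    simp only [hrw] at hψ'
    have h0 := hψ'.sub_const (Φ x)
    rw [sub_self] at h0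
    exact h0
  have hAcal : Tendsto (fun n => ∫ x in B, |A n x| ∂volume) atTop (𝓝 0) := by
    have h := tendsto_integral_of_dominated_convergence (μ := volume.restrict B)
      (F := fun n x => |A n x|) (f := fun _ => (0:ℝ)) (bound := fun _ => M + M)
      (fun n => ((hAm n).abs).aestronglyMeasurable.restrict)
      (integrableOn_const hBfin.ne)
      (fun n => by
        filter_upwards [ae_restrict_mem hBmeas] with x hx
        rw [Real.norm_eq_abs, abs_abs]
        exact hAbd n x hx)
      (by
        filter_upwards with x
        simpa using (hAtends x).abs)
    simpa using h
  -- key inequality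
  have hkey : ∀ n : ℕ, (∫ x in B, |(n : ℝ)⁻¹ * ∑ i ∈ Finset.range n, Real.log ‖x - a n i‖
        - ∫ y, Real.log ‖x - y‖ ∂μ| ∂volume)
      ≤ (∫ x in B, |A n x| ∂volume) + δ/3 + δ/3 := by
    intro n
    have hint : IntegrableOn (fun x => |A n x| + Gn n x + G x) B volume :=
      ((hAint n).add (hGnint n)).add hGint
    have hpt : ∀ᵐ x ∂(volume.restrict B),
        |(n : ℝ)⁻¹ * ∑ i ∈ Finset.range n, Real.log ‖x - a n i‖
          - ∫ y, Real.log ‖x - y‖ ∂μ| ≤ |A n x| + Gn n x + G x := by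
      filter_upwards [ae_restrict_mem hBmeas, hGae] with x hxB hxg
      have hcongr : (fun y => Real.log ‖x - y‖) = fun y => k x y - g x y := by
        funext y; simp only [hgdef]; ring
      have hphi : (∫ y, Real.log ‖x - y‖ ∂μ) = Φ x - ∫ y, g x y ∂μ := by
        rw [hcongr, integral_sub (hkint x hxB) hxg]
      have hsum : (n:ℝ)⁻¹ * ∑ i ∈ Finset.range n, Real.log ‖x - a n i‖
          = (n:ℝ)⁻¹ * ∑ i ∈ Finset.range n, k x (a n i)
            - (n:ℝ)⁻¹ * ∑ i ∈ Finset.range n, g x (a n i) := by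
        rw [← mul_sub, ← Finset.sum_sub_distrib]
        congr 1
        refine Finset.sum_congr rfl fun i _ => ?_
        simp only [hgdef]; ring
      have e1 : (n : ℝ)⁻¹ * ∑ i ∈ Finset.range n, Real.log ‖x - a n i‖
          - ∫ y, Real.log ‖x - y‖ ∂μ
          = A n x - (n:ℝ)⁻¹ * ∑ i ∈ Finset.range n, g x (a n i) + ∫ y, g x y ∂μ := by
        rw [hsum, hphi, hAdef]; ring
      rw [e1]
      have t2 : |(n:ℝ)⁻¹ * ∑ i ∈ Finset.range n, g x (a n i)| ≤ Gn n x := by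
        rw [abs_mul, abs_of_nonneg (inv_nonneg.mpr (Nat.cast_nonneg n) : (0:ℝ) ≤ (n:ℝ)⁻¹)]
        exact mul_le_mul_of_nonneg_left (Finset.abs_sum_le_sum_abs _ _) (by positivity)
      have t3 : |∫ y, g x y ∂μ| ≤ G x := by
        have h := norm_integral_le_integral_norm (μ := μ) (fun y => g x y)
        simpa [Real.norm_eq_abs] using h
      have t1 : |A n x - (n:ℝ)⁻¹ * ∑ i ∈ Finset.range n, g x (a n i) + ∫ y, g x y ∂μ|
          ≤ |A n x - (n:ℝ)⁻¹ * ∑ i ∈ Finset.range n, g x (a n i)| + |∫ y, g x y ∂μ| :=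
        abs_add_le _ _
      have t4 := habs_sub (A n x) ((n:ℝ)⁻¹ * ∑ i ∈ Finset.range n, g x (a n i))
      linarith
    calc (∫ x in B, |(n : ℝ)⁻¹ * ∑ i ∈ Finset.range n, Real.log ‖x - a n i‖
          - ∫ y, Real.log ‖x - y‖ ∂μ| ∂volume)
        ≤ ∫ x in B, (|A n x| + Gn n x + G x) ∂volume :=
          integral_mono_of_nonneg (Eventually.of_forall fun x => abs_nonneg _) hint hpt
      _ = (∫ x in B, |A n x| ∂volume) + (∫ x in B, Gn n x ∂volume) + ∫ x in B, G x ∂volume := by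
          have i1 : Integrable (fun x => |A n x| + Gn n x) (volume.restrict B) :=
            (hAint n).add (hGnint n)
          rw [integral_add i1 hGint, integral_add (hAint n) (hGnint n)]
      _ ≤ (∫ x in B, |A n x| ∂volume) + δ/3 + δ/3 := by
          have h1 := hGnbd n
          have h2 := hGbd
          linarith
  have hev : ∀ᶠ n in atTop, (∫ x in B, |A n x| ∂volume) < δ/3 :=
    hAcal.eventually_lt_const (by linarith : (0:ℝ) < δ/3)
  filter_upwards [hev] with n hn
  calc (∫ x in B, |(n : ℝ)⁻¹ * ∑ i ∈ Finset.range n, Real.log ‖x - a n i‖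
        - ∫ y, Real.log ‖x - y‖ ∂μ| ∂volume)
      ≤ (∫ x in B, |A n x| ∂volume) + δ/3 + δ/3 := hkey n
    _ < δ := by linarith
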